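/- Uniformly for w in [1 + (log n)²/n, 2], c_n(w)/a_n(w) = n²·(1 + O(1/(log n)²)) as n → ∞; in particular sqrt(c_n(w)/a_n(w)) = n·(1 + O(1/(log n)²)). -/

import Mathlib

open Finset Real

noncomputable def aa (n : ℕ) (w : ℝ) : ℝ := ∑ j ∈ Finset.range (n+1), w ^ j
noncomputable def bb (n : ℕ) (w : ℝ) : ℝ := ∑ j ∈ Finset.range (n+1), (j : ℝ) * w ^ j
noncomputable def cc (n : ℕ) (w : ℝ) : ℝ := ∑ j ∈ Finset.range (n+1), (j : ℝ)^2 * w ^ j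

lemma key13 (n : ℕ) (w : ℝ) (hw : 1 < w) :
    ∑ j ∈ Finset.range (n+1), ((n:ℝ) - j) * w ^ j ≤ w^(n+1)/(w-1)^2 := by
  have hw0 : (0:ℝ) < w := by linarith
  have hr0 : (0:ℝ) ≤ w⁻¹ := by positivity
  have hr1 : w⁻¹ < 1 := by
    rw [inv_lt_one_iff₀]; right; exact hw
  have hrefl := Finset.sum_range_reflect (fun j => ((n:ℝ) - j) * w ^ j) (n+1)
  simp only [Nat.add_sub_cancel] at hrefl
  rw [← hrefl]
  have step : ∀ j ∈ Finset.range (n+1),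
      ((n:ℝ) - ((n - j : ℕ):ℝ)) * w ^ (n - j) = w^n * ((j:ℝ) * w⁻¹ ^ j) := by
    intro j hj
    have hjn : j ≤ n := Nat.lt_succ_iff.mp (Finset.mem_range.mp hj)
    rw [Nat.cast_sub hjn, pow_sub₀ w (ne_of_gt hw0) hjn, inv_pow]
    ring
  rw [Finset.sum_congr rfl step, ← Finset.mul_sum]
  have hsum : ∑ j ∈ Finset.range (n+1), (j:ℝ) * w⁻¹ ^ j ≤ w⁻¹ / (1 - w⁻¹)^2 := by
    have h := hasSum_coe_mul_geometric_of_norm_lt_one (r := w⁻¹)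
      (by rw [Real.norm_eq_abs, abs_of_nonneg hr0]; exact hr1)
    exact sum_le_hasSum _ (fun i _ => by positivity) h
  have heq : w^n * (w⁻¹ / (1 - w⁻¹)^2) = w^(n+1)/(w-1)^2 := by
    have h1 : w ≠ 0 := ne_of_gt hw0
    have h2 : w - 1 ≠ 0 := by intro h; nlinarith
    field_simp
    ring
  calc w^n * ∑ j ∈ Finset.range (n+1), (j:ℝ) * w⁻¹ ^ j
      ≤ w^n * (w⁻¹ / (1 - w⁻¹)^2) := by
        apply mul_le_mul_of_nonneg_left hsum (by positivity)
    _ = w^(n+1)/(w-1)^2 := heq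

set_option maxHeartbeats 1000000 in
theorem stmt13 : ∃ C : ℝ, 0 < C ∧ ∃ N : ℕ, ∀ n : ℕ, N ≤ n →
    ∀ w ∈ Set.Icc (1 + (Real.log n)^2 / n) (2 : ℝ),
      |cc n w / aa n w - (n : ℝ)^2| ≤ C * (n : ℝ)^2 / (Real.log n)^2 ∧
      |Real.sqrt (cc n w / aa n w) - (n : ℝ)| ≤ C * (n : ℝ) / (Real.log n)^2 := by
  refine ⟨4, by norm_num, 3, ?_⟩
  intro n hn w hw
  obtain ⟨hwl, hwr⟩ := hw
  set L := Real.log n with hLdef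
  have hn3 : (3:ℝ) ≤ n := by exact_mod_cast hn
  have hn0 : (0:ℝ) < n := by linarith
  have hL1 : 1 ≤ L := by
    rw [hLdef, Real.le_log_iff_exp_le (by linarith)]
    calc Real.exp 1 ≤ 2.7182818286 := Real.exp_one_lt_d9.le
      _ ≤ n := by linarith
  have hL2 : (0:ℝ) < L^2 := by nlinarith
  have hw1 : 1 < w := by
    have : 0 < L^2 / n := by positivity
    linarith
  have hw0 : (0:ℝ) < w := by linarith
  -- w^n ≥ 2
  have hwn : 2 ≤ w ^ n := by
    have h1 : (1 + L^2/n : ℝ) ^ n ≤ w ^ n := by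
      apply pow_le_pow_left₀ (by positivity) hwl
    have h2 : 1 + (n:ℝ) * (L^2/n) ≤ (1 + L^2/n)^n := by
      apply one_add_mul_le_pow
      have : (0:ℝ) ≤ L^2/n := by positivity
      linarith
    have h3 : (n:ℝ) * (L^2/n) = L^2 := by field_simp
    nlinarith
  have hwn1 : 2 ≤ w^(n+1) := by
    calc (2:ℝ) ≤ w^n := hwn
      _ ≤ w^(n+1) := pow_le_pow_right₀ (le_of_lt hw1) (Nat.le_succ n)
  have ha_pos : 0 < aa n w := by
    rw [aa]
    apply Finset.sum_pos (fun j _ => by positivity) (by simp)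
  have hgeom : aa n w = (w^(n+1) - 1)/(w - 1) := by
    rw [aa]; exact geom_sum_eq (ne_of_gt hw1) (n+1)
  have hwm1 : (0:ℝ) < w - 1 := by linarith
  have ha_lb : w^(n+1) ≤ 2*(w-1) * aa n w := by
    rw [hgeom]
    have : 2*(w-1)*((w^(n+1)-1)/(w-1)) = 2*(w^(n+1)-1) := by
      field_simp
    rw [this]; linarith
  have hkey := key13 n w hw1
  have hc_ub : cc n w ≤ (n:ℝ)^2 * aa n w := by
    rw [cc, aa, Finset.mul_sum]
    apply Finset.sum_le_sum
    intro j hj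
    have hjn : (j:ℝ) ≤ n := by
      exact_mod_cast Nat.lt_succ_iff.mp (Finset.mem_range.mp hj)
    have hwj : (0:ℝ) ≤ w^j := by positivity
    have hj0 : (0:ℝ) ≤ j := Nat.cast_nonneg j
    exact mul_le_mul_of_nonneg_right (by nlinarith) hwj
  have hdiff : (n:ℝ)^2 * aa n w - cc n w ≤ 2*n * (w^(n+1)/(w-1)^2) := by
    have e1 : (n:ℝ)^2 * aa n w - cc n w
        = ∑ j ∈ Finset.range (n+1), ((n:ℝ)^2 - (j:ℝ)^2) * w^j := by
      rw [aa, cc, Finset.mul_sum, ← Finset.sum_sub_distrib]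
      exact Finset.sum_congr rfl (fun j _ => by ring)
    rw [e1]
    calc ∑ j ∈ Finset.range (n+1), ((n:ℝ)^2 - (j:ℝ)^2) * w^j
        ≤ ∑ j ∈ Finset.range (n+1), 2*n*(((n:ℝ) - j) * w^j) := by
          apply Finset.sum_le_sum
          intro j hj
          have hjn : (j:ℝ) ≤ n := by
            exact_mod_cast Nat.lt_succ_iff.mp (Finset.mem_range.mp hj)
          have hwj : (0:ℝ) ≤ w^j := by positivity
          have hj0 : (0:ℝ) ≤ j := Nat.cast_nonneg j
          nlinarith [mul_nonneg (mul_nonneg (sub_nonneg.mpr hjn) (sub_nonneg.mpr hjn)) hwj]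
      _ = 2*n * ∑ j ∈ Finset.range (n+1), ((n:ℝ) - j) * w^j := by
          rw [Finset.mul_sum]
      _ ≤ 2*n * (w^(n+1)/(w-1)^2) := by
          apply mul_le_mul_of_nonneg_left hkey (by positivity)
  have hmain : (n:ℝ)^2 * aa n w - cc n w ≤ 4*(n:ℝ)^2/L^2 * aa n w := by
    have h3 : 2*n * (w^(n+1)/(w-1)^2) ≤ 2*n*((2*(w-1)*aa n w)/(w-1)^2) := by
      gcongr
    have h4 : 2*n*((2*(w-1)*aa n w)/(w-1)^2) = 4*n*aa n w/(w-1) := by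
      field_simp
      ring
    have hδ : L^2/n ≤ w - 1 := by linarith
    have h5 : 4*n*aa n w/(w-1) ≤ 4*(n:ℝ)^2/L^2 * aa n w := by
      rw [div_le_iff₀ hwm1]
      have h6 : L^2/n ≤ w - 1 := hδ
      have h7 : 4*(n:ℝ)^2/L^2 * aa n w * (L^2/n) = 4*n*aa n w := by
        field_simp
      calc 4*(n:ℝ)*aa n w = 4*(n:ℝ)^2/L^2 * aa n w * (L^2/n) := h7.symm
        _ ≤ 4*(n:ℝ)^2/L^2 * aa n w * (w-1) := by
            apply mul_le_mul_of_nonneg_left h6 (by positivity)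
    linarith
  -- part 1
  have hub : cc n w / aa n w ≤ (n:ℝ)^2 := by
    rw [div_le_iff₀ ha_pos]; linarith
  have hlb : (n:ℝ)^2 - 4*(n:ℝ)^2/L^2 ≤ cc n w / aa n w := by
    rw [le_div_iff₀ ha_pos]; nlinarith
  have part1 : |cc n w / aa n w - (n : ℝ)^2| ≤ 4 * (n : ℝ)^2 / L^2 := by
    rw [abs_le]
    constructor
    · have : 4*(n:ℝ)^2/L^2 = 4*(n:ℝ)^2/L^2 := rfl
      rw [mul_div_assoc] at *
      linarith [hlb]
    · rw [mul_div_assoc]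
      have : (0:ℝ) ≤ 4 * ((n:ℝ)^2/L^2) := by positivity
      linarith
  refine ⟨by rw [mul_div_assoc] at part1 ⊢; exact part1, ?_⟩
  -- part 2
  set s := Real.sqrt (cc n w / aa n w) with hsdef
  have hx0 : 0 ≤ cc n w / aa n w := by
    apply div_nonneg _ ha_pos.le
    rw [cc]
    apply Finset.sum_nonneg (fun j _ => by positivity)
  have hss : s * s = cc n w / aa n w := Real.mul_self_sqrt hx0
  have hsnn : 0 ≤ s := Real.sqrt_nonneg _
  have hsle : s ≤ n := by
    have h := Real.sqrt_le_sqrt hub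
    rwa [Real.sqrt_sq hn0.le] at h
  rw [abs_of_nonpos (by linarith)]
  have h6 : ((n:ℝ) - s) * n ≤ 4*(n:ℝ)^2/L^2 := by
    have hss2 : s * s ≤ s * n := mul_le_mul_of_nonneg_left hsle hsnn
    have h6a : ((n:ℝ) - s) * n = (n:ℝ)^2 - s*n := by ring
    rw [h6a]
    linarith
  have h8 : 4*(n:ℝ)^2/L^2 / n = 4*(n:ℝ)/L^2 := by
    field_simp
  have h7 : n - s ≤ 4*(n:ℝ)/L^2 := by
    rw [← h8, le_div_iff₀ hn0]
    linarith
  rw [mul_div_assoc]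
  rw [mul_div_assoc] at h7
  linarith
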